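/- For real a > −1 and b > 0, ∫_0^∞ x^a/(1+x) · exp(−b x) dx = exp(b) · Γ(a+1) · Γ(−a, b), where Γ(−a,b) = ∫_b^∞ t^{−a−1} e^{−t} dt is the upper incomplete Gamma function with (possibly negative) first argument. -/

import Mathlib

open MeasureTheory Set

private lemma aux_exp_int {r : ℝ} (hr : 0 < r) :
    ∫ u in Ioi (0:ℝ), Real.exp (-(r * u)) = 1 / r := by
  have h := Real.integral_rpow_mul_exp_neg_mul_Ioi (a := 1) one_pos hr
  simpa [Real.Gamma_one] using h

private lemma aux_shift (f : ℝ → ℝ) (b : ℝ) :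
    ∫ u in Ioi (0:ℝ), f (u + b) = ∫ t in Ioi b, f t := by
  rw [← integral_indicator measurableSet_Ioi, ← integral_indicator measurableSet_Ioi,
    ← integral_add_right_eq_self (fun x => (Ioi b).indicator f x) b]
  congr 1 with x
  by_cases h : 0 < x
  · rw [indicator_of_mem (by simpa using h), indicator_of_mem (by simpa using h)]
  · rw [indicator_of_notMem (by simpa using h), indicator_of_notMem (by simpa using h)]

private noncomputable def Faux (a b : ℝ) : ℝ × ℝ → ℝ := fun p =>
  p.1 ^ a * Real.exp (-(b * p.1)) * Real.exp (-((1 + p.1) * p.2))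

set_option maxHeartbeats 1000000 in
private lemma Faux_integrable {a b : ℝ} (ha : -1 < a) (hb : 0 < b) :
    Integrable (Faux a b)
      ((volume.restrict (Ioi (0:ℝ))).prod (volume.restrict (Ioi (0:ℝ)))) := by
  have hgam : IntegrableOn (fun x : ℝ => x ^ a * Real.exp (-(b * x))) (Ioi 0) := by
    have h := integrableOn_rpow_mul_exp_neg_mul_rpow ha zero_lt_one hb
    refine h.congr_fun (fun x hx => ?_) measurableSet_Ioi
    simp only [Real.rpow_one, neg_mul]
  have hmeas : AEStronglyMeasurable (Faux a b)
      ((volume.restrict (Ioi (0:ℝ))).prod (volume.restrict (Ioi (0:ℝ)))) := by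
    rw [Measure.prod_restrict]
    refine ContinuousOn.aestronglyMeasurable ?_ (measurableSet_Ioi.prod measurableSet_Ioi)
    refine ContinuousOn.mul (ContinuousOn.mul ?_ ?_) ?_
    · exact continuous_fst.continuousOn.rpow_const
        (fun p hp => Or.inl (ne_of_gt (mem_Ioi.mp hp.1)))
    · exact (((continuous_const.mul continuous_fst).neg).rexp).continuousOn
    · exact ((((continuous_const.add continuous_fst).mul continuous_snd).neg).rexp).continuousOn
  rw [MeasureTheory.integrable_prod_iff hmeas]
  constructor
  · filter_upwards [self_mem_ae_restrict measurableSet_Ioi] with x hx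
    have h1x : (0:ℝ) < 1 + x := by linarith [mem_Ioi.mp hx]
    have h2 : IntegrableOn (fun u : ℝ => Real.exp (-((1 + x) * u))) (Ioi 0) :=
      (exp_neg_integrableOn_Ioi 0 h1x).congr_fun (fun u _ => by simp only [neg_mul])
        measurableSet_Ioi
    simp only [Faux]
    exact h2.const_mul _
  · have hb1 : ∀ x ∈ Ioi (0:ℝ),
        (∫ u in Ioi (0:ℝ), ‖Faux a b (x, u)‖) =
          x ^ a * Real.exp (-(b * x)) * (1 / (1 + x)) := by
      intro x hx
      have hx0 := mem_Ioi.mp hx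
      have h1x : (0:ℝ) < 1 + x := by linarith
      have hnorm : ∀ u : ℝ, ‖Faux a b (x, u)‖ =
          x ^ a * Real.exp (-(b * x)) * Real.exp (-((1 + x) * u)) := by
        intro u
        have h1 : (0:ℝ) ≤ x ^ a := (Real.rpow_pos_of_pos hx0 a).le
        rw [Real.norm_eq_abs, Faux, abs_of_nonneg (by positivity)]
      simp_rw [hnorm]
      rw [MeasureTheory.integral_const_mul, aux_exp_int h1x]
    refine (hgam.mono' ?_ ?_)
    · exact hmeas.norm.integral_prod_right'
    · filter_upwards [self_mem_ae_restrict measurableSet_Ioi] with x hx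
      rw [show (∫ u, ‖Faux a b (x, u)‖ ∂(volume.restrict (Ioi (0:ℝ)))) =
          x ^ a * Real.exp (-(b * x)) * (1 / (1 + x)) from hb1 x hx]
      have hx0 := mem_Ioi.mp hx
      have h2 : 1 / (1 + x) ≤ 1 := by
        rw [div_le_one (by linarith)]; linarith
      rw [Real.norm_eq_abs, abs_of_nonneg (by positivity)]
      have h3 : x ^ a * Real.exp (-(b * x)) * (1 / (1 + x)) ≤
          x ^ a * Real.exp (-(b * x)) * 1 :=
        mul_le_mul_of_nonneg_left h2 (by positivity)
      linarith

/-- ∫₀^∞ x^a/(1+x) e^{-bx} dx = e^b Γ(a+1) Γ(-a,b). -/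
theorem stmt_4 (a b : ℝ) (ha : -1 < a) (hb : 0 < b) :
    ∫ x in Ioi (0:ℝ), x ^ a / (1 + x) * Real.exp (-(b * x)) =
      Real.exp b * Real.Gamma (a + 1) *
        ∫ t in Ioi b, t ^ (-a - 1) * Real.exp (-t) := by
  have ha1 : (0:ℝ) < a + 1 := by linarith
  calc
    ∫ x in Ioi (0:ℝ), x ^ a / (1 + x) * Real.exp (-(b * x))
        = ∫ x in Ioi (0:ℝ), ∫ u in Ioi (0:ℝ), Faux a b (x, u) := by
          refine setIntegral_congr_fun measurableSet_Ioi fun x hx => ?_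
          have h1x : (0:ℝ) < 1 + x := by linarith [mem_Ioi.mp hx]
          simp only [Faux]
          rw [MeasureTheory.integral_const_mul, aux_exp_int h1x]
          ring
    _ = ∫ u in Ioi (0:ℝ), ∫ x in Ioi (0:ℝ), Faux a b (x, u) :=
          MeasureTheory.integral_integral_swap (Faux_integrable ha hb)
    _ = ∫ u in Ioi (0:ℝ),
          Real.exp (-u) * ((1 / (b + u)) ^ (a + 1) * Real.Gamma (a + 1)) := by
          refine setIntegral_congr_fun measurableSet_Ioi fun u hu => ?_
          have hbu : (0:ℝ) < b + u := by linarith [mem_Ioi.mp hu]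
          have key : ∀ x ∈ Ioi (0:ℝ), Faux a b (x, u)
              = Real.exp (-u) * (x ^ (a + 1 - 1) * Real.exp (-((b + u) * x))) := by
            intro x hx
            simp only [Faux, add_sub_cancel_right]
            rw [mul_assoc, ← Real.exp_add, mul_comm (Real.exp (-u)), mul_assoc,
              ← Real.exp_add]
            congr 2
            ring
          rw [setIntegral_congr_fun measurableSet_Ioi key,
            MeasureTheory.integral_const_mul,
            Real.integral_rpow_mul_exp_neg_mul_Ioi ha1 hbu]
    _ = ∫ u in Ioi (0:ℝ),
          (fun t => Real.exp b * Real.Gamma (a + 1) * (t ^ (-a - 1) * Real.exp (-t)))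
            (u + b) := by
          refine setIntegral_congr_fun measurableSet_Ioi fun u hu => ?_
          have hbu : (0:ℝ) < b + u := by linarith [mem_Ioi.mp hu]
          simp only
          rw [one_div, Real.inv_rpow hbu.le, ← Real.rpow_neg hbu.le]
          have h1 : -(a + 1) = -a - 1 := by ring
          have h2 : b + u = u + b := by ring
          rw [h1, h2]
          rw [show Real.exp (-(u + b)) = Real.exp (-u) * Real.exp (-b) by
            rw [← Real.exp_add]; ring_nf]
          rw [show Real.exp b * Real.Gamma (a + 1) *
              ((u + b) ^ (-a - 1) * (Real.exp (-u) * Real.exp (-b)))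
              = (Real.exp b * Real.exp (-b)) * (Real.exp (-u) *
                ((u + b) ^ (-a - 1) * Real.Gamma (a + 1))) by ring]
          rw [← Real.exp_add, add_neg_cancel, Real.exp_zero, one_mul]
    _ = Real.exp b * Real.Gamma (a + 1) * ∫ t in Ioi b, t ^ (-a - 1) * Real.exp (-t) := by
          rw [aux_shift (fun t => Real.exp b * Real.Gamma (a + 1) *
            (t ^ (-a - 1) * Real.exp (-t))) b, MeasureTheory.integral_const_mul]
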